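/- For every integer n ≥ 1 there exists a unique ring homomorphism θ_n : W_n(A/pA) → A/p^nA such that for every Witt vector x = (x_0, …, x_{n-1}) ∈ W_n(A/p^nA), θ_n applied to the image of x under the map W_n(A/p^nA) → W_n(A/pA) induced by the projection A/p^nA → A/pA equals Σ_{i=0}^{n-1} p^i · x_i^{p^{n-i}}. Moreover, for every n ≥ 1 the composite of θ_{n+1} : W_{n+1}(A/pA) → A/p^{n+1}A with the projection A/p^{n+1}A → A/p^nA equals θ_n composed with R∘F : W_{n+1}(A/pA) → W_n(A/pA). -/

import Mathlib

/-- The canonical projection `A ⧸ (a) → A ⧸ (b)` when `b ∣ a`. -/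
def qfactor {A : Type*} [CommRing A] {a b : A} (h : b ∣ a) :
    (A ⧸ Ideal.span {a}) →+* A ⧸ Ideal.span {b} :=
  Ideal.Quotient.lift _ (Ideal.Quotient.mk _) fun x hx => by
    rw [Ideal.Quotient.eq_zero_iff_mem]
    exact Ideal.span_singleton_le_span_singleton.mpr h hx

lemma qfactor_mk {A : Type*} [CommRing A] {a b : A} (h : b ∣ a) (x : A) :
    qfactor h (Ideal.Quotient.mk _ x) = Ideal.Quotient.mk _ x :=
  Ideal.Quotient.lift_mk _ _ _

lemma qfactor_surjective {A : Type*} [CommRing A] {a b : A} (h : b ∣ a) :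
    Function.Surjective (qfactor h) := fun y => by
  obtain ⟨x, rfl⟩ := Ideal.Quotient.mk_surjective y
  exact ⟨Ideal.Quotient.mk _ x, qfactor_mk h x⟩

lemma qfactor_qfactor {A : Type*} [CommRing A] {a b c : A} (h1 : b ∣ a) (h2 : c ∣ b)
    (h3 : c ∣ a) (x : A ⧸ Ideal.span {a}) :
    qfactor h2 (qfactor h1 x) = qfactor h3 x := by
  obtain ⟨x, rfl⟩ := Ideal.Quotient.mk_surjective x
  simp [qfactor_mk]

lemma qfactor_eq_zero {A : Type*} [CommRing A] {a b : A} (h : b ∣ a)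
    {x : A ⧸ Ideal.span {a}} (hx : qfactor h x = 0) :
    ∃ c, x = (Ideal.Quotient.mk _ b) * c := by
  obtain ⟨y, rfl⟩ := Ideal.Quotient.mk_surjective x
  rw [qfactor_mk, Ideal.Quotient.eq_zero_iff_mem, Ideal.mem_span_singleton] at hx
  obtain ⟨c, rfl⟩ := hx
  exact ⟨Ideal.Quotient.mk _ c, by rw [map_mul]⟩

lemma pow_p_zero (A : Type*) [CommRing A] (p n m : ℕ) (h : n ≤ m) :
    (p : A ⧸ Ideal.span {(p : A) ^ n}) ^ m = 0 := by
  rw [show ((p : ℕ) : A ⧸ Ideal.span {(p : A) ^ n}) =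
      Ideal.Quotient.mk _ (p : A) from (map_natCast _ p).symm, ← map_pow,
    Ideal.Quotient.eq_zero_iff_mem]
  exact Ideal.mem_span_singleton.mpr (pow_dvd_pow _ h)

lemma wv_map_frobenius (p : ℕ) [Fact p.Prime] {R S : Type*} [CommRing R] [CommRing S]
    (f : R →+* S) (x : WittVector p R) :
    WittVector.map f (WittVector.frobenius x) = WittVector.frobenius (WittVector.map f x) := by
  ext n
  rw [WittVector.map_coeff, WittVector.coeff_frobenius, WittVector.coeff_frobenius,
    MvPolynomial.map_aeval, MvPolynomial.aeval_def]
  refine MvPolynomial.eval₂Hom_congr (RingHom.ext_int _ _) ?_ rfl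
  funext i
  rw [WittVector.map_coeff]

lemma wv_map_map (p : ℕ) [Fact p.Prime] {R S T : Type*} [CommRing R] [CommRing S] [CommRing T]
    (g : S →+* T) (f : R →+* S) (x : WittVector p R) :
    WittVector.map g (WittVector.map f x) = WittVector.map (g.comp f) x := by
  ext n; simp [WittVector.map_coeff]

lemma ghost_sum (p : ℕ) [Fact p.Prime] {R : Type*} [CommRing R] (n : ℕ) (x : WittVector p R) :
    WittVector.ghostComponent n x =
      ∑ i ∈ Finset.range (n + 1), (p : R) ^ i * x.coeff i ^ p ^ (n - i) := by
  rw [WittVector.ghostComponent_apply, aeval_wittPolynomial]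

theorem statement15 (p : ℕ) [Fact p.Prime] (A : Type*) [CommRing A]
    (hA : ∀ k : ℕ, ¬ p ∣ k → IsUnit (k : A)) :
    (∀ n : ℕ, ∀ _hn : 1 ≤ n,
      ∃! θ : TruncatedWittVector p n (A ⧸ Ideal.span {(p : A)}) →+*
          A ⧸ Ideal.span {(p : A) ^ n},
        ∀ w : WittVector p (A ⧸ Ideal.span {(p : A) ^ n}),
          θ (WittVector.truncate n (WittVector.map (qfactor (dvd_pow_self (p : A) (by omega))) w)) =
            ∑ i : Fin n, (p : A ⧸ Ideal.span {(p : A) ^ n}) ^ (i : ℕ) *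
              (WittVector.truncate n w).coeff i ^ p ^ (n - (i : ℕ))) ∧
    (∀ n : ℕ, ∀ _hn : 1 ≤ n,
      ∀ (θn : TruncatedWittVector p n (A ⧸ Ideal.span {(p : A)}) →+*
          A ⧸ Ideal.span {(p : A) ^ n})
        (θn1 : TruncatedWittVector p (n + 1) (A ⧸ Ideal.span {(p : A)}) →+*
          A ⧸ Ideal.span {(p : A) ^ (n + 1)}),
        (∀ w : WittVector p (A ⧸ Ideal.span {(p : A) ^ n}),
          θn (WittVector.truncate n (WittVector.map (qfactor (dvd_pow_self (p : A) (by omega))) w)) =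
            ∑ i : Fin n, (p : A ⧸ Ideal.span {(p : A) ^ n}) ^ (i : ℕ) *
              (WittVector.truncate n w).coeff i ^ p ^ (n - (i : ℕ))) →
        (∀ w : WittVector p (A ⧸ Ideal.span {(p : A) ^ (n + 1)}),
          θn1 (WittVector.truncate (n + 1)
              (WittVector.map (qfactor (dvd_pow_self (p : A) (by omega))) w)) =
            ∑ i : Fin (n + 1), (p : A ⧸ Ideal.span {(p : A) ^ (n + 1)}) ^ (i : ℕ) *
              (WittVector.truncate (n + 1) w).coeff i ^ p ^ (n + 1 - (i : ℕ))) →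
        ∀ w : WittVector p (A ⧸ Ideal.span {(p : A)}),
          qfactor (pow_dvd_pow (p : A) (Nat.le_succ n)) (θn1 (WittVector.truncate (n + 1) w)) =
            θn (WittVector.truncate n (WittVector.frobenius w))) := by
  have hp2 : 2 ≤ p := (Fact.out : p.Prime).two_le
  constructor
  · intro n hn
    set B := A ⧸ Ideal.span {(p : A) ^ n} with hB
    have hn0 : n ≠ 0 := by omega
    set q : B →+* A ⧸ Ideal.span {(p : A)} := qfactor (dvd_pow_self (p : A) (by omega)) with hq
    set π : WittVector p B →+* TruncatedWittVector p n (A ⧸ Ideal.span {(p : A)}) :=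
      (WittVector.truncate n).comp (WittVector.map q) with hπdef
    have hπ : Function.Surjective π :=
      (WittVector.truncate_surjective p n _).comp
        (WittVector.map_surjective q (qfactor_surjective _))
    have hker : RingHom.ker π ≤ RingHom.ker (WittVector.ghostComponent (p := p) n) := by
      intro x hx
      rw [RingHom.mem_ker] at hx ⊢
      have hcoeff : ∀ i : ℕ, i < n → q (x.coeff i) = 0 := by
        intro i hi
        have := congrArg (fun t => TruncatedWittVector.coeff ⟨i, hi⟩ t) hx
        simpa [hπdef, RingHom.comp_apply, WittVector.coeff_truncate,
          WittVector.map_coeff] using this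
      rw [ghost_sum]
      refine Finset.sum_eq_zero fun i hi => ?_
      rw [Finset.mem_range] at hi
      rcases lt_or_ge i n with h | h
      · obtain ⟨c, hc⟩ := qfactor_eq_zero _ (hcoeff i h)
        have hmkp : (Ideal.Quotient.mk (Ideal.span {(p : A) ^ n}) (p : A)) = (p : B) :=
          map_natCast _ p
        rw [hc, hmkp, mul_pow, ← mul_assoc, ← pow_add]
        have hzero : (p : B) ^ (i + p ^ (n - i)) = 0 := by
          apply pow_p_zero
          have : n - i ≤ p ^ (n - i) := Nat.le_of_lt (Nat.lt_pow_self (by omega : 1 < p))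
          omega
        rw [hzero, zero_mul]
      · have hin : i = n := by omega
        simp only [hin, Nat.sub_self, pow_zero, pow_one, pow_p_zero A p n n le_rfl, zero_mul]
    set θ := (π.liftOfRightInverse (Function.surjInv hπ)
      (Function.rightInverse_surjInv hπ)) ⟨WittVector.ghostComponent n, hker⟩ with hθdef
    have hcomp : ∀ w : WittVector p B, θ (π w) = WittVector.ghostComponent n w := fun w =>
      π.liftOfRightInverse_comp_apply _ _ _ w
    have hchar : ∀ w : WittVector p B,
        θ (WittVector.truncate n (WittVector.map q w)) =
          ∑ i : Fin n, (p : B) ^ (i : ℕ) *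
            (WittVector.truncate n w).coeff i ^ p ^ (n - (i : ℕ)) := by
      intro w
      have h1 : θ (WittVector.truncate n (WittVector.map q w)) =
          WittVector.ghostComponent n w := hcomp w
      rw [h1, ghost_sum, Finset.sum_range_succ, Nat.sub_self, pow_zero, pow_one,
        pow_p_zero A p n n le_rfl, zero_mul, add_zero]
      simp only [WittVector.coeff_truncate]
      rw [Fin.sum_univ_eq_sum_range (fun i => (p : B) ^ i * w.coeff i ^ p ^ (n - i))]
    refine ⟨θ, hchar, ?_⟩
    intro θ' hθ'
    refine RingHom.ext fun t => ?_
    obtain ⟨u, rfl⟩ := hπ t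
    simp only [hπdef, RingHom.comp_apply]
    rw [hθ' u, hchar u]
  · intro n hn θn θn1 hθn hθn1 w
    obtain ⟨v, hv⟩ := WittVector.map_surjective (p := p)
      (qfactor (dvd_pow_self (p : A) (show n + 1 ≠ 0 by omega)))
      (qfactor_surjective _) w
    set qstep := qfactor (pow_dvd_pow (p : A) (Nat.le_succ n)) with hqstep
    set qn := qfactor (dvd_pow_self (p : A) (show n ≠ 0 by omega)) with hqn
    set v' := WittVector.map qstep v with hv'def
    have hv'w : WittVector.map qn v' = w := by
      rw [hv'def, wv_map_map, ← hv]
      have hcmp : qn.comp qstep = qfactor (dvd_pow_self (p : A) (show n + 1 ≠ 0 by omega)) :=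
        RingHom.ext fun x => qfactor_qfactor (pow_dvd_pow (p : A) (Nat.le_succ n))
          (dvd_pow_self (p : A) (show n ≠ 0 by omega))
          (dvd_pow_self (p : A) (show n + 1 ≠ 0 by omega)) x
      rw [hcmp]
    have hcoe : ∀ i : ℕ, qstep (v.coeff i) = v'.coeff i := fun i =>
      (WittVector.map_coeff _ _ _).symm
    have hL : qstep (θn1 (WittVector.truncate (n + 1) w)) =
        WittVector.ghostComponent (n + 1) v' := by
      rw [← hv, hθn1 v, map_sum]
      simp only [map_mul, map_pow, map_natCast, WittVector.coeff_truncate, hcoe]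
      rw [Fin.sum_univ_eq_sum_range
        (fun i => (p : A ⧸ Ideal.span {(p : A) ^ n}) ^ i * v'.coeff i ^ p ^ (n + 1 - i)),
        ghost_sum]
      conv_rhs => rw [Finset.sum_range_succ]
      rw [Nat.sub_self, pow_zero, pow_one, pow_p_zero A p n (n + 1) (by omega),
        zero_mul, add_zero]
    have hfw : WittVector.map qn (WittVector.frobenius v') = WittVector.frobenius w := by
      rw [wv_map_frobenius, hv'w]
    have hR : θn (WittVector.truncate n (WittVector.frobenius w)) =
        WittVector.ghostComponent n (WittVector.frobenius v') := by
      rw [← hfw, hθn (WittVector.frobenius v')]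
      simp only [WittVector.coeff_truncate]
      rw [Fin.sum_univ_eq_sum_range
        (fun i => (p : A ⧸ Ideal.span {(p : A) ^ n}) ^ i *
          (WittVector.frobenius v').coeff i ^ p ^ (n - i)),
        ghost_sum]
      conv_rhs => rw [Finset.sum_range_succ]
      rw [Nat.sub_self, pow_zero, pow_one, pow_p_zero A p n n le_rfl, zero_mul, add_zero]
    rw [hL, hR, WittVector.ghostComponent_frobenius]
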